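/- For every natural number j ≥ 1, one has t_j > 0. -/

import Mathlib

open Real

/-- The summand `a_{j,k} = (-π²/4)^k / (2j+2k)! · C(j+k, j)`. -/
noncomputable def a (j k : ℕ) : ℝ :=
  (-(π ^ 2) / 4) ^ k / (Nat.factorial (2 * j + 2 * k)) * (Nat.choose (j + k) j)

/-- `t_j = Σ_{k=0}^∞ a_{j,k}`. -/
noncomputable def t (j : ℕ) : ℝ := ∑' k : ℕ, a j k

noncomputable def bb (j k : ℕ) : ℝ :=
  (π ^ 2 / 4) ^ k / (Nat.factorial (2 * j + 2 * k)) * (Nat.choose (j + k) j)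

lemma bb_pos (j k : ℕ) : 0 < bb j k := by
  unfold bb
  have h2 : (0:ℝ) < (Nat.factorial (2*j+2*k) : ℝ) := by
    exact_mod_cast (Nat.factorial_pos _)
  have h3 : (0:ℝ) < (Nat.choose (j+k) j : ℝ) := by
    exact_mod_cast Nat.choose_pos (Nat.le_add_right j k)
  have h1 : (0:ℝ) < (π ^ 2 / 4) ^ k := by positivity
  positivity

lemma abs_a (j k : ℕ) : |a j k| = bb j k := by
  have : a j k = (-1:ℝ)^k * bb j k := by
    unfold a bb
    rw [show (-(π^2)/4 : ℝ) = (-1) * (π^2/4) by ring, mul_pow]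
    ring
  rw [this, abs_mul, abs_pow, abs_neg, abs_one, one_pow, one_mul,
    abs_of_pos (bb_pos j k)]

lemma choose_id (j k : ℕ) : (j+k+1) * Nat.choose (j+k) j = Nat.choose (j+k+1) j * (k+1) := by
  have h1 : Nat.choose (j+k) j = Nat.choose (j+k) k := by
    rw [← Nat.choose_symm (Nat.le_add_right j k), Nat.add_sub_cancel_left]
  have h2 : Nat.choose (j+k+1) j = Nat.choose (j+k+1) (k+1) := by
    rw [← Nat.choose_symm (by omega : k+1 ≤ j+k+1)]
    congr 1; omega
  rw [h1, h2]
  exact_mod_cast Nat.add_one_mul_choose_eq (j+k) k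

lemma pi_sq_lt : π ^ 2 < 10 := by
  nlinarith [pi_lt_d2, pi_pos]

lemma bb_ratio (j k : ℕ) (hj : 1 ≤ j) : bb j (k+1) ≤ 5/12 * bb j k := by
  have hfact : (Nat.factorial (2*j+2*(k+1)) : ℝ)
      = (2*j+2*k+2) * ((2*j+2*k+1) * (Nat.factorial (2*j+2*k))) := by
    have : 2*j+2*(k+1) = (2*j+2*k+1) + 1 := by omega
    rw [this, Nat.factorial_succ, Nat.factorial_succ]
    push_cast; ring
  have hC : ((j+k+1 : ℕ) : ℝ) * (Nat.choose (j+k) j : ℝ)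
      = (Nat.choose (j+k+1) j : ℝ) * ((k+1 : ℕ) : ℝ) := by
    exact_mod_cast choose_id j k
  have hjR : (1:ℝ) ≤ (j:ℝ) := by exact_mod_cast hj
  have hkR : (0:ℝ) ≤ (k:ℝ) := Nat.cast_nonneg k
  have hnatR : (6:ℝ) * ((j:ℝ)+k+1) ≤ ((k:ℝ)+1) * ((2*j+2*k+1) * (2*j+2*k+2)) := by
    nlinarith [mul_nonneg (sub_nonneg.mpr hjR) hkR, mul_nonneg hkR hkR,
      mul_nonneg (mul_nonneg hkR hkR) hkR,
      mul_nonneg (mul_nonneg (sub_nonneg.mpr hjR) hkR) hkR,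
      mul_nonneg (sub_nonneg.mpr hjR) (sub_nonneg.mpr hjR),
      mul_nonneg (mul_nonneg (sub_nonneg.mpr hjR) (sub_nonneg.mpr hjR)) hkR]
  have hC1 : (0:ℝ) < (Nat.choose (j+k) j : ℝ) := by
    exact_mod_cast Nat.choose_pos (Nat.le_add_right j k)
  have hF : (0:ℝ) < (Nat.factorial (2*j+2*k) : ℝ) := by
    exact_mod_cast (Nat.factorial_pos _)
  have hP : (0:ℝ) ≤ (π^2/4)^k := by positivity
  -- key: (π²/4) * C2 ≤ 5/12 * (2j+2k+1)*(2j+2k+2) * C1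
  have key : (π^2/4) * (Nat.choose (j+k+1) j : ℝ)
      ≤ 5/12 * ((2*j+2*k+1) * (2*j+2*k+2)) * (Nat.choose (j+k) j : ℝ) := by
    have hk1 : (0:ℝ) < ((k:ℝ)+1) := by positivity
    rw [← mul_le_mul_iff_right₀ hk1]
    have hrw : ((k:ℝ)+1) * ((π^2/4) * (Nat.choose (j+k+1) j : ℝ))
        = (π^2/4) * (((j:ℝ)+k+1) * (Nat.choose (j+k) j : ℝ)) := by
      push_cast at hC ⊢
      nlinarith [hC]
    rw [hrw]
    have hp10 := pi_sq_lt
    push_cast at hnatR ⊢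
    nlinarith [hC1, hnatR, mul_pos (by positivity : (0:ℝ) < (j:ℝ)+k+1) hC1,
      mul_le_mul_of_nonneg_left hnatR (le_of_lt hC1)]
  unfold bb
  rw [hfact, pow_succ, show j+(k+1) = j+k+1 from rfl]
  have h1 : (0:ℝ) < (2*(j:ℝ)+2*k+2) * ((2*(j:ℝ)+2*k+1) * (Nat.factorial (2*j+2*k) : ℝ)) := by
    positivity
  have hFne : (Nat.factorial (2*j+2*k) : ℝ) ≠ 0 := ne_of_gt hF
  have hR : (5:ℝ)/12 * ((π^2/4)^k / (Nat.factorial (2*j+2*k) : ℝ) * (Nat.choose (j+k) j : ℝ))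
      = (π^2/4)^k / ((2*(j:ℝ)+2*k+2) * ((2*(j:ℝ)+2*k+1) * (Nat.factorial (2*j+2*k) : ℝ)))
        * (5/12 * ((2*(j:ℝ)+2*k+1) * (2*(j:ℝ)+2*k+2)) * (Nat.choose (j+k) j : ℝ)) := by
    have hd1 : (2*(j:ℝ)+2*k+2) ≠ 0 := by positivity
    have hd2 : (2*(j:ℝ)+2*k+1) ≠ 0 := by positivity
    field_simp
  calc (π^2/4)^k * (π^2/4) / ((2*(j:ℝ)+2*k+2) * ((2*(j:ℝ)+2*k+1) * (Nat.factorial (2*j+2*k) : ℝ)))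
        * (Nat.choose (j+k+1) j : ℝ)
      = (π^2/4)^k / ((2*(j:ℝ)+2*k+2) * ((2*(j:ℝ)+2*k+1) * (Nat.factorial (2*j+2*k) : ℝ)))
        * (π^2/4 * (Nat.choose (j+k+1) j : ℝ)) := by ring
    _ ≤ (π^2/4)^k / ((2*(j:ℝ)+2*k+2) * ((2*(j:ℝ)+2*k+1) * (Nat.factorial (2*j+2*k) : ℝ)))
        * (5/12 * ((2*(j:ℝ)+2*k+1) * (2*(j:ℝ)+2*k+2)) * (Nat.choose (j+k) j : ℝ)) := by
      apply mul_le_mul_of_nonneg_left key (by positivity)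
    _ = 5/12 * ((π^2/4)^k / (Nat.factorial (2*j+2*k) : ℝ) * (Nat.choose (j+k) j : ℝ)) := hR.symm

lemma bb_le (j : ℕ) (hj : 1 ≤ j) (k : ℕ) : bb j k ≤ bb j 0 * (5/12)^k := by
  induction k with
  | zero => simp
  | succ n ih =>
    calc bb j (n+1) ≤ 5/12 * bb j n := bb_ratio j n hj
    _ ≤ 5/12 * (bb j 0 * (5/12)^n) := by
        have := bb_pos j n
        nlinarith
    _ = bb j 0 * (5/12)^(n+1) := by ring

lemma summable_a (j : ℕ) (hj : 1 ≤ j) : Summable (a j) := by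
  have hg : Summable (fun k : ℕ => bb j 0 * (5/12)^k) :=
    (summable_geometric_of_lt_one (by norm_num) (by norm_num)).mul_left _
  exact (hg.of_nonneg_of_le (fun k => abs_nonneg _)
    (fun k => by rw [abs_a]; exact bb_le j hj k)).of_abs

/-- For every natural `j ≥ 1`, `t_j > 0`. -/
theorem t_pos (j : ℕ) (hj : 1 ≤ j) : 0 < t j := by
  have hsum := summable_a j hj
  have h0 : a j 0 = bb j 0 := by
    unfold a bb; norm_num
  have ht : t j = a j 0 + ∑' k, a j (k+1) := by
    unfold t
    exact Summable.tsum_eq_zero_add hsum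
  have hsum1 : Summable (fun k => a j (k+1)) := by
    exact (summable_nat_add_iff 1).mpr hsum
  have habs : |∑' k, a j (k+1)| ≤ ∑' k, |a j (k+1)| := by
    simpa using norm_tsum_le_tsum_norm (by simpa using hsum1.abs : Summable fun k => ‖a j (k+1)‖)
  have hgeo : Summable (fun k : ℕ => bb j 0 * (5/12) * (5/12)^k) :=
    (summable_geometric_of_lt_one (by norm_num) (by norm_num)).mul_left _
  have h2 : ∑' k, |a j (k+1)| ≤ ∑' k : ℕ, bb j 0 * (5/12) * (5/12)^k := by
    apply Summable.tsum_le_tsum _ hsum1.abs hgeo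
    intro k
    rw [abs_a]
    calc bb j (k+1) ≤ bb j 0 * (5/12)^(k+1) := bb_le j hj (k+1)
    _ = bb j 0 * (5/12) * (5/12)^k := by ring
  have h3 : ∑' k : ℕ, bb j 0 * (5/12) * (5/12)^k = bb j 0 * (5/12) * (12/7) := by
    rw [tsum_mul_left, tsum_geometric_of_lt_one (by norm_num) (by norm_num)]
    norm_num
  have hb := bb_pos j 0
  have : ∑' k, a j (k+1) ≥ -(bb j 0 * (5/7)) := by
    have := abs_le.mp (habs.trans (h2.trans_eq h3))
    linarith [this.1]
  rw [ht, h0]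
  linarith
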